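/- arXiv:1812.02283 — 4 statements merged into one kernel-verified Lean document; each statement's English description precedes it below -/
import Mathlib

section
/- Let r be a diagonal n×n complex matrix and s an n×n complex matrix with [r,s] + Iₙ = -ij for some column vector i and row vector j. Then the diagonal entries of r are pairwise distinct, and for all p ≠ q, s_{pq} · (r_{pp} - r_{qq}) = -i_p j_q. -/
open Matrix

/-- If `r = diagonal ρ` and `[r,s] + Iₙ = -i·j`, then the diagonal entries of `r` are
pairwise distinct, and for `p ≠ q` we have `s_{pq} (ρ_p - ρ_q) = -i_p j_q`. -/
theorem stmt_5 (n : ℕ) (ρ : Fin n → ℂ) (s : Matrix (Fin n) (Fin n) ℂ)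
    (i j : Fin n → ℂ)
    (h : diagonal ρ * s - s * diagonal ρ + 1 = -vecMulVec i j) :
    Function.Injective ρ ∧
      ∀ p q : Fin n, p ≠ q → s p q * (ρ p - ρ q) = -(i p * j q) := by
  have key : ∀ p q : Fin n, s p q * (ρ p - ρ q) + (if p = q then (1:ℂ) else 0) = -(i p * j q) := by
    intro p q
    have hpq := congrFun (congrFun h p) q
    simp only [Matrix.sub_apply, Matrix.add_apply] at hpq
    rw [show ((diagonal ρ * s) p q : ℂ) = ρ p * s p q from by
        simp [Matrix.mul_apply, Matrix.diagonal_apply, Finset.sum_ite_eq],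
      show ((s * diagonal ρ) p q : ℂ) = s p q * ρ q from by
        simp [Matrix.mul_apply, Matrix.diagonal_apply, Finset.sum_ite_eq]] at hpq
    rw [show ((1 : Matrix (Fin n) (Fin n) ℂ) p q) = (if p = q then (1:ℂ) else 0) from
      Matrix.one_apply] at hpq
    rw [show ((-vecMulVec i j) p q : ℂ) = -(i p * j q) from by
      simp [Matrix.vecMulVec_apply]] at hpq
    linear_combination hpq
  have diag : ∀ p, i p * j p = -1 := by
    intro p
    have := key p p
    rw [if_pos rfl, sub_self, mul_zero, zero_add] at this
    linear_combination this
  constructor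
  · intro p q hpq
    by_contra hne
    have hk := key p q
    rw [if_neg hne, hpq, sub_self, mul_zero, zero_add] at hk
    have hip : i p ≠ 0 := fun h0 => by simpa [h0] using diag p
    have hjq : j q ≠ 0 := fun h0 => by simpa [h0] using diag q
    exact (mul_ne_zero hip hjq) (by linear_combination hk)
  · intro p q hpq
    have := key p q
    rwa [if_neg hpq, add_zero] at this
end

section
/- Let r be an upper triangular n×n complex matrix with r_{aa} ≠ r_{a'a'} for some indices a < a'. Set x = -r_{aa'}/(r_{a'a'} - r_{aa}) and let b = Iₙ + x·E_{aa'} (elementary matrix). Then r' = b r b⁻¹ is upper triangular, has (a,a')-entry zero, agrees with r on all diagonal entries, and r'_{pq} = r_{pq} for all (p,q) with p > a, and for p = a with q < a', and for p < a with q ≠ a'. -/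
open Matrix

/-- The key step producing the Jordan semicanonical form: conjugating an upper
triangular matrix `r` with `r_{aa} ≠ r_{a'a'}` (for `a < a'`) by
`b = Iₙ + x E_{aa'}` with `x = -r_{aa'}/(r_{a'a'} - r_{aa})` kills the
`(a,a')`-entry, keeps the matrix upper triangular with the same diagonal, and
does not change the entries in rows below `a`, in row `a` to the left of `a'`,
nor in rows above `a` outside column `a'`. -/
theorem stmt_9 (n : ℕ) (r : Matrix (Fin n) (Fin n) ℂ)
    (hr : ∀ p q : Fin n, q < p → r p q = 0)
    (a a' : Fin n) (haa' : a < a') (hne : r a a ≠ r a' a')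
    (x : ℂ) (hx : x = -r a a' / (r a' a' - r a a))
    (b : Matrix (Fin n) (Fin n) ℂ) (hb : b = 1 + Matrix.single a a' x)
    (r' : Matrix (Fin n) (Fin n) ℂ) (hr' : r' = b * r * b⁻¹) :
    (∀ p q : Fin n, q < p → r' p q = 0) ∧
    r' a a' = 0 ∧
    (∀ p : Fin n, r' p p = r p p) ∧
    (∀ p q : Fin n, a < p → r' p q = r p q) ∧
    (∀ q : Fin n, q < a' → r' a q = r a q) ∧
    (∀ p q : Fin n, p < a → q ≠ a' → r' p q = r p q) := by
  have hane : a ≠ a' := ne_of_lt haa'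
  set B := Matrix.single a a' x with hB
  have hbinv : b⁻¹ = 1 - B := by
    refine inv_eq_right_inv ?_
    rw [hb]
    have hBB : B * B = 0 := single_mul_single_of_ne x a a' a hane.symm x
    rw [add_mul, one_mul, mul_sub, mul_one]
    rw [hBB, sub_zero]
    abel
  have hkey : ∀ p q : Fin n, r' p q =
      r p q + x * (if p = a then r a' q else 0) - x * (if q = a' then r p a else 0) := by
    intro p q
    have hBr : ∀ u v : Fin n, (B * r) u v = if u = a then x * r a' v else 0 := by
      intro u v
      split
      · next h => rw [h]; exact single_mul_apply_same x a a' v r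
      · next h => exact single_mul_apply_of_ne x a a' u v h r
    have hrB : ∀ M : Matrix (Fin n) (Fin n) ℂ,
        (M * B) p q = if q = a' then M p a * x else 0 := by
      intro M
      split
      · next h => rw [h]; exact mul_single_apply_same x a a' p M
      · next h => exact mul_single_apply_of_ne x a a' p q h M
    rw [hr', hbinv, hb, add_mul, one_mul, mul_sub, mul_one]
    rw [Matrix.sub_apply, Matrix.add_apply, hBr, hrB]
    rw [Matrix.add_apply, hBr]
    have hra'a : r a' a = 0 := hr a' a haa'
    by_cases hp : p = a <;> by_cases hq : q = a' <;>
      simp [hp, hq, hra'a] <;> ring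
  refine ⟨?_, ?_, ?_, ?_, ?_, ?_⟩
  · intro p q hqp
    rw [hkey]
    by_cases hp : p = a
    · subst hp
      have hq : q ≠ a' := fun h => absurd (h ▸ hqp) (not_lt_of_gt haa')
      simp [hq, hr p q hqp, hr a' q (hqp.trans haa')]
    · by_cases hq : q = a'
      · subst hq
        simp [hp, hr p q hqp, hr p a (haa'.trans hqp)]
      · simp [hp, hq, hr p q hqp]
  · rw [hkey]
    simp only [if_pos rfl, ↓reduceIte]
    have hsub : r a' a' - r a a ≠ 0 := sub_ne_zero.mpr (Ne.symm hne)
    rw [hx]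
    field_simp
    ring
  · intro p
    rw [hkey]
    by_cases hp : p = a
    · subst hp
      simp [hane, hr a' p haa']
    · by_cases hp' : p = a'
      · subst hp'
        simp [hp, hr p a haa']
      · simp [hp, hp']
  · intro p q hap
    rw [hkey]
    have hp : p ≠ a := ne_of_gt hap
    by_cases hq : q = a'
    · simp [hp, hq, hr p a hap]
    · simp [hp, hq]
  · intro q hq
    rw [hkey]
    have hq' : q ≠ a' := ne_of_lt hq
    simp [hq', hr a' q hq]
  · intro p q hpa hq
    rw [hkey]
    simp [ne_of_lt hpa, hq]
end

section
/- Every upper triangular n×n complex matrix r is conjugate, by an invertible upper triangular matrix, to a matrix M such that: whenever M_{aa} ≠ M_{a'a'} for a < a', one has M_{aa'} = 0. -/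
open Matrix

namespace StmtTenAux

variable {n : ℕ}

/-- upper triangular -/
def UT (M : Matrix (Fin n) (Fin n) ℂ) : Prop := ∀ p q : Fin n, q < p → M p q = 0

lemma UT.mul {A B : Matrix (Fin n) (Fin n) ℂ} (hA : UT A) (hB : UT B) : UT (A * B) := by
  intro p q h
  rw [Matrix.mul_apply]
  apply Finset.sum_eq_zero
  intro k _
  rcases lt_or_ge k p with hk | hk
  · rw [hA p k hk, zero_mul]
  · rw [hB k q (lt_of_lt_of_le h hk), mul_zero]

lemma UT.one : UT (1 : Matrix (Fin n) (Fin n) ℂ) := by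
  intro p q h
  exact Matrix.one_apply_ne (ne_of_gt h)

lemma invOne : (1 : Matrix (Fin n) (Fin n) ℂ)⁻¹ = 1 :=
  Matrix.inv_eq_right_inv (by rw [one_mul])

/-- the invariant: all pairs earlier than `(k, j)` in the processing order are fixed -/
def P (k j : ℕ) (M : Matrix (Fin n) (Fin n) ℂ) : Prop :=
  ∀ a a' : Fin n, a < a' →
    ((a' : ℕ) - (a : ℕ) < k ∨ ((a' : ℕ) - (a : ℕ) = k ∧ (a : ℕ) < j)) →
    M a a ≠ M a' a' → M a a' = 0

/-- single elementary conjugation step killing the `(a,a')` entry -/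
lemma step (M : Matrix (Fin n) (Fin n) ℂ) (hM : UT M) (a a' : Fin n) (hlt : a < a')
    (hne : M a a ≠ M a' a') :
    ∃ u : Matrix (Fin n) (Fin n) ℂ, IsUnit u ∧ UT u ∧ UT u⁻¹ ∧
      UT (u * M * u⁻¹) ∧
      (∀ i, (u * M * u⁻¹) i i = M i i) ∧
      (u * M * u⁻¹) a a' = 0 ∧
      (∀ p q : Fin n, (p ≠ a ∨ q ≠ a') → (q : ℕ) - (p : ℕ) ≤ (a' : ℕ) - (a : ℕ) →
        p < q → (u * M * u⁻¹) p q = M p q) := by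
  have hne' : a ≠ a' := ne_of_lt hlt
  set c : ℂ := M a a' / (M a a - M a' a') with hc
  set E : Matrix (Fin n) (Fin n) ℂ := single a a' c with hE
  have hE2 : E * E = 0 := single_mul_single_of_ne (c := c) (i := a) (j := a') (k := a) (h := hne'.symm) (d := c)
  have hinv : (1 + E) * (1 - E) = 1 := by
    have h1 : (1 + E) * (1 - E) = 1 - E * E := by noncomm_ring
    rw [h1, hE2, sub_zero]
  have hu : IsUnit (1 + E) := by
    have hdet : IsUnit (1 + E).det := by
      apply IsUnit.of_mul_eq_one (1 - E).det
      rw [← Matrix.det_mul, hinv, Matrix.det_one]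
    exact (Matrix.isUnit_iff_isUnit_det _).mpr hdet
  have huinv : (1 + E)⁻¹ = 1 - E := Matrix.inv_eq_right_inv hinv
  have hEME : E * M * E = 0 := by
    ext p q
    by_cases hq : q = a'
    · rw [hq, mul_single_apply_same]
      by_cases hp : p = a
      · rw [hp, single_mul_apply_same, hM a' a hlt]
        simp
      · rw [single_mul_apply_of_ne c a a' _ _ hp]
        simp
    · rw [mul_single_apply_of_ne c a a' _ _ hq]
      simp
  have hN : (1 + E) * M * (1 + E)⁻¹ = M + E * M - M * E - E * M * E := by
    rw [huinv]; noncomm_ring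
  have hentry : ∀ p q, ((1 + E) * M * (1 + E)⁻¹) p q =
      M p q + (if p = a then c * M a' q else 0) - (if q = a' then M p a * c else 0) := by
    intro p q
    rw [hN, hEME, sub_zero, Matrix.sub_apply, Matrix.add_apply]
    congr 1
    · congr 1
      by_cases hp : p = a
      · rw [hp, single_mul_apply_same, if_pos rfl]
      · rw [single_mul_apply_of_ne c a a' _ _ hp, if_neg hp]
    · by_cases hq : q = a'
      · rw [hq, mul_single_apply_same, if_pos rfl]
      · rw [mul_single_apply_of_ne c a a' _ _ hq, if_neg hq]
  refine ⟨1 + E, hu, ?_, ?_, ?_, ?_, ?_, ?_⟩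
  · -- UT (1+E)
    intro p q h
    rw [Matrix.add_apply, UT.one p q h, zero_add]
    exact single_apply_of_ne a a' c p q
      (by rintro ⟨rfl, rfl⟩; exact absurd hlt (not_lt_of_gt h))
  · -- UT (1+E)⁻¹
    rw [huinv]
    intro p q h
    rw [Matrix.sub_apply, UT.one p q h, zero_sub, neg_eq_zero]
    exact single_apply_of_ne a a' c p q
      (by rintro ⟨rfl, rfl⟩; exact absurd hlt (not_lt_of_gt h))
  · -- UT of the conjugate
    intro p q h
    rw [hentry p q, hM p q h]
    have h1 : (if p = a then c * M a' q else 0) = 0 := by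
      by_cases hp : p = a
      · rw [if_pos hp]
        have hqa : q < a' := by rw [hp] at h; exact h.trans hlt
        rw [hM a' q hqa, mul_zero]
      · rw [if_neg hp]
    have h2 : (if q = a' then M p a * c else 0) = 0 := by
      by_cases hq : q = a'
      · rw [if_pos hq]
        have hap : a < p := by rw [hq] at h; exact hlt.trans h
        rw [hM p a hap, zero_mul]
      · rw [if_neg hq]
    rw [h1, h2]; ring
  · -- diagonal preserved
    intro i
    rw [hentry i i]
    have h1 : (if i = a then c * M a' i else 0) = 0 := by
      by_cases hp : i = a
      · rw [if_pos hp, hp, hM a' a hlt, mul_zero]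
      · rw [if_neg hp]
    have h2 : (if i = a' then M i a * c else 0) = 0 := by
      by_cases hq : i = a'
      · rw [if_pos hq, hq, hM a' a hlt, zero_mul]
      · rw [if_neg hq]
    rw [h1, h2]; ring
  · -- entry (a, a') killed
    rw [hentry a a', if_pos rfl, if_pos rfl]
    have hd : M a a - M a' a' ≠ 0 := sub_ne_zero.mpr hne
    rw [hc]
    field_simp
    ring
  · -- other early entries unchanged
    intro p q hpq hle hplt
    rw [hentry p q]
    have h1 : (if p = a then c * M a' q else 0) = 0 := by
      by_cases hp : p = a
      · rw [if_pos hp]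
        have hqa : q < a' := by
          have h1 : (p : ℕ) = (a : ℕ) := by rw [hp]
          have h2 := Fin.lt_iff_val_lt_val.mp hplt
          have h3 := Fin.lt_iff_val_lt_val.mp hlt
          have h4 : (q : ℕ) ≠ (a' : ℕ) := by
            intro hv
            rcases hpq with hne | hne
            · exact hne hp
            · exact hne (Fin.ext hv)
          exact Fin.lt_iff_val_lt_val.mpr (by omega)
        rw [hM a' q hqa, mul_zero]
      · rw [if_neg hp]
    have h2 : (if q = a' then M p a * c else 0) = 0 := by
      by_cases hq : q = a'
      · rw [if_pos hq]
        have hap : a < p := by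
          have h1 : (q : ℕ) = (a' : ℕ) := by rw [hq]
          have h2 := Fin.lt_iff_val_lt_val.mp hplt
          have h3 := Fin.lt_iff_val_lt_val.mp hlt
          have h4 : (p : ℕ) ≠ (a : ℕ) := by
            intro hv
            rcases hpq with hne | hne
            · exact hne (Fin.ext hv)
            · exact hne hq
          exact Fin.lt_iff_val_lt_val.mpr (by omega)
        rw [hM p a hap, zero_mul]
      · rw [if_neg hq]
    rw [h1, h2]; ring

/-- advance the invariant from `(k, j)` to `(k, j+1)` -/
lemma indexStep (k j : ℕ) (M : Matrix (Fin n) (Fin n) ℂ) (hM : UT M) (hP : P k j M) :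
    ∃ u : Matrix (Fin n) (Fin n) ℂ, IsUnit u ∧ UT u ∧ UT u⁻¹ ∧
      UT (u * M * u⁻¹) ∧ P k (j + 1) (u * M * u⁻¹) := by
  by_cases h : ∃ a a' : Fin n, (a : ℕ) = j ∧ a < a' ∧ (a' : ℕ) - (a : ℕ) = k ∧
      M a a ≠ M a' a' ∧ M a a' ≠ 0
  · obtain ⟨a, a', haj, hlt, hd, hne, _⟩ := h
    obtain ⟨u, hu, hut, huti, hutN, hdiag, hkill, hunch⟩ := step M hM a a' hlt hne
    refine ⟨u, hu, hut, huti, hutN, ?_⟩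
    intro b b' hbb' hcond hdne
    have hdne' : M b b ≠ M b' b' := by rwa [hdiag b, hdiag b'] at hdne
    rcases hcond with hlt' | ⟨heq, hjlt⟩
    · have hne2 : b ≠ a ∨ b' ≠ a' := by
        by_contra hcon
        push_neg at hcon
        obtain ⟨rfl, rfl⟩ := hcon
        omega
      rw [hunch b b' hne2 (by omega) hbb']
      exact hP b b' hbb' (Or.inl (by omega)) hdne'
    · rcases lt_or_eq_of_le (Nat.lt_succ_iff.mp hjlt) with hjlt' | hbj
      · have hne2 : b ≠ a ∨ b' ≠ a' := by
          left
          intro hcon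
          rw [hcon] at hjlt'
          omega
        rw [hunch b b' hne2 (by omega) hbb']
        exact hP b b' hbb' (Or.inr ⟨heq, hjlt'⟩) hdne'
      · have hba : b = a := Fin.ext (by omega)
        have hbval : (b : ℕ) < (b' : ℕ) := hbb'
        have haval : (a : ℕ) < (a' : ℕ) := hlt
        have hba' : b' = a' := Fin.ext (by omega)
        rw [hba, hba']
        exact hkill
  · refine ⟨1, isUnit_one, UT.one, by rw [invOne]; exact UT.one,
      by simpa [invOne] using hM, ?_⟩
    have hconj : (1 : Matrix (Fin n) (Fin n) ℂ) * M * (1 : Matrix (Fin n) (Fin n) ℂ)⁻¹ = M := by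
      simp [invOne]
    rw [hconj]
    intro b b' hbb' hcond hdne
    rcases hcond with hlt' | ⟨heq, hjlt⟩
    · exact hP b b' hbb' (Or.inl hlt') hdne
    · rcases lt_or_eq_of_le (Nat.lt_succ_iff.mp hjlt) with hjlt' | hbj
      · exact hP b b' hbb' (Or.inr ⟨heq, hjlt'⟩) hdne
      · by_contra hzero
        exact h ⟨b, b', hbj, hbb', heq, hdne, hzero⟩

/-- composition of two conjugations -/
lemma compose (M b1 b2 : Matrix (Fin n) (Fin n) ℂ)
    (h1 : IsUnit b1) (hUT1 : UT b1) (hUTi1 : UT b1⁻¹)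
    (h2 : IsUnit b2) (hUT2 : UT b2) (hUTi2 : UT b2⁻¹) :
    IsUnit (b2 * b1) ∧ UT (b2 * b1) ∧ UT (b2 * b1)⁻¹ ∧
      (b2 * b1) * M * (b2 * b1)⁻¹ = b2 * (b1 * M * b1⁻¹) * b2⁻¹ := by
  refine ⟨h2.mul h1, hUT2.mul hUT1, ?_, ?_⟩
  · rw [Matrix.mul_inv_rev]
    exact hUTi1.mul hUTi2
  · rw [Matrix.mul_inv_rev]
    noncomm_ring

/-- sweep row indices `j, j+1, ..., j+t-1` at distance `k` -/
lemma inner (k : ℕ) : ∀ (t j : ℕ) (M : Matrix (Fin n) (Fin n) ℂ), UT M → P k j M →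
    ∃ b : Matrix (Fin n) (Fin n) ℂ, IsUnit b ∧ UT b ∧ UT b⁻¹ ∧
      UT (b * M * b⁻¹) ∧ P k (j + t) (b * M * b⁻¹) := by
  intro t
  induction t with
  | zero =>
    intro j M hM hP
    refine ⟨1, isUnit_one, UT.one, by rw [invOne]; exact UT.one, ?_, ?_⟩ <;>
      simp [invOne, hM, hP]
  | succ t ih =>
    intro j M hM hP
    obtain ⟨u, hu, hut, huti, hutN, hPN⟩ := indexStep k j M hM hP
    obtain ⟨b, hb, hbt, hbti, hbtN, hPb⟩ := ih (j + 1) (u * M * u⁻¹) hutN hPN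
    obtain ⟨hunit, hcUT, hcUTi, hceq⟩ := compose M u b hu hut huti hb hbt hbti
    refine ⟨b * u, hunit, hcUT, hcUTi, ?_, ?_⟩
    · rw [hceq]; exact hbtN
    · rw [hceq]
      have : j + (t + 1) = j + 1 + t := by omega
      rw [this]
      exact hPb

/-- process all distances `< k` -/
lemma outer (M : Matrix (Fin n) (Fin n) ℂ) (hM : UT M) : ∀ k : ℕ,
    ∃ b : Matrix (Fin n) (Fin n) ℂ, IsUnit b ∧ UT b ∧ UT b⁻¹ ∧
      UT (b * M * b⁻¹) ∧ P k 0 (b * M * b⁻¹) := by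
  intro k
  induction k with
  | zero =>
    refine ⟨1, isUnit_one, UT.one, by rw [invOne]; exact UT.one, ?_, ?_⟩
    · simpa [invOne] using hM
    · intro a a' _ hcond _
      rcases hcond with h | ⟨_, h⟩ <;> omega
  | succ k ih =>
    obtain ⟨b1, hb1, hb1t, hb1ti, hb1tN, hPb1⟩ := ih
    obtain ⟨b2, hb2, hb2t, hb2ti, hb2tN, hPb2⟩ :=
      inner k n 0 (b1 * M * b1⁻¹) hb1tN hPb1
    obtain ⟨hunit, hcUT, hcUTi, hceq⟩ := compose M b1 b2 hb1 hb1t hb1ti hb2 hb2t hb2ti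
    refine ⟨b2 * b1, hunit, hcUT, hcUTi, ?_, ?_⟩
    · rw [hceq]; exact hb2tN
    · rw [hceq]
      intro a a' haa' hcond hdne
      rcases hcond with hlt' | ⟨_, h⟩
      · rcases lt_or_eq_of_le (Nat.lt_succ_iff.mp hlt') with h1 | h1
        · exact hPb2 a a' haa' (Or.inl (by simpa using h1)) hdne
        · exact hPb2 a a' haa' (Or.inr ⟨by simpa using h1, by simpa using a.isLt⟩) hdne
      · omega

end StmtTenAux

open StmtTenAux in
/-- Weak Jordan `B`-semicanonical form: every upper triangular complex matrix is
conjugate by an invertible upper triangular matrix to a matrix `M` with `M_{aa'} = 0`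
whenever `a < a'` and `M_{aa} ≠ M_{a'a'}`. -/
theorem stmt_10 (n : ℕ) (r : Matrix (Fin n) (Fin n) ℂ)
    (hr : ∀ p q : Fin n, q < p → r p q = 0) :
    ∃ b : Matrix (Fin n) (Fin n) ℂ, IsUnit b ∧ (∀ p q : Fin n, q < p → b p q = 0) ∧
      ∀ a a' : Fin n, a < a' → (b * r * b⁻¹) a a ≠ (b * r * b⁻¹) a' a' →
        (b * r * b⁻¹) a a' = 0 := by
  obtain ⟨b, hb, hbt, _, _, hP⟩ := outer r hr n
  refine ⟨b, hb, hbt, ?_⟩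
  intro a a' haa' hdne
  refine hP a a' haa' (Or.inl ?_) hdne
  have : (a' : ℕ) < n := a'.isLt
  omega
end

section
/- Let r₀ be the single n×n Jordan block with eigenvalue λ, and suppose [r₀,s] + Iₙ = -ij for some n×n matrix s, column vector i, and row vector j. Then the matrix X = [r₀,s] + Iₙ is upper triangular, and exactly one diagonal entry of X is nonzero, equal to n. -/
open Matrix

/-- If `r₀` is a single `n × n` Jordan block and `[r₀,s] + Iₙ = -i·j`, then
`X = [r₀,s] + Iₙ` is upper triangular and exactly one diagonal entry of `X` is
nonzero, equal to `n`. -/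
theorem stmt_17 (n : ℕ) (hn : 0 < n) (l : ℂ) (r₀ : Matrix (Fin n) (Fin n) ℂ)
    (hr₀ : ∀ p q : Fin n, r₀ p q =
      if (p : ℕ) + 1 = q then 1 else if p = q then l else 0)
    (s : Matrix (Fin n) (Fin n) ℂ) (i j : Fin n → ℂ)
    (h : r₀ * s - s * r₀ + 1 = -vecMulVec i j)
    (X : Matrix (Fin n) (Fin n) ℂ) (hX : X = r₀ * s - s * r₀ + 1) :
    (∀ p q : Fin n, q < p → X p q = 0) ∧
      ∃ p : Fin n, X p p = (n : ℂ) ∧ ∀ q : Fin n, q ≠ p → X q q = 0 := by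
  have hXij : ∀ p q, X p q = -(i p * j q) := by
    intro p q
    rw [hX, h]
    simp [Matrix.vecMulVec_apply]
  -- trace of X is n
  have htr : ∑ p, X p p = (n : ℂ) := by
    have hT : X.trace = (n : ℂ) := by
      rw [hX, Matrix.trace_add, Matrix.trace_sub, Matrix.trace_mul_comm, Matrix.trace_one]
      simp
    simpa [Matrix.trace, Matrix.diag] using hT
  -- the nilpotent shift
  set N : Matrix (Fin n) (Fin n) ℂ := r₀ - l • 1 with hNdef
  have hN : ∀ p q : Fin n, N p q = if (p : ℕ) + 1 = (q : ℕ) then 1 else 0 := by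
    intro p q
    simp only [hNdef, Matrix.sub_apply, Matrix.smul_apply, Matrix.one_apply, hr₀,
      smul_eq_mul]
    rcases eq_or_ne ((p : ℕ) + 1) (q : ℕ) with h1 | h1
    · have hne : p ≠ q := by
        intro e; rw [e] at h1; omega
      simp [h1, hne]
    · rcases eq_or_ne p q with h2 | h2 <;> simp [h1, h2]
  have hc : Commute r₀ N := by
    show r₀ * N = N * r₀
    rw [hNdef]
    simp [mul_sub, sub_mul, Matrix.mul_smul, Matrix.smul_mul]
  have hNd : ∀ d (p q : Fin n), (N ^ d) p q = if (p : ℕ) + d = (q : ℕ) then 1 else 0 := by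
    intro d
    induction d with
    | zero =>
      intro p q
      simp [Matrix.one_apply, Fin.val_inj]
    | succ d ih =>
      intro p q
      rw [pow_succ, Matrix.mul_apply]
      by_cases hlt : (p : ℕ) + d < n
      · rw [Finset.sum_eq_single (⟨(p : ℕ) + d, hlt⟩ : Fin n)]
        · rw [ih, hN]
          simp only [if_pos rfl, one_mul]
          congr 1
          · simp [Nat.add_assoc]
        · intro k _ hk
          rw [ih]
          have hne : ¬ ((p : ℕ) + d = (k : ℕ)) := fun e => hk (Fin.ext e.symm)
          simp [hne]
        · simp
      · have hq : ¬ ((p : ℕ) + (d + 1) = (q : ℕ)) := by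
          have := q.isLt; omega
        rw [if_neg hq]
        apply Finset.sum_eq_zero
        intro k _
        rw [ih]
        have hne : ¬ ((p : ℕ) + d = (k : ℕ)) := by
          have := k.isLt; omega
        simp [hne]
  -- trace of X * N^d equals trace of N^d
  have htrM : ∀ d : ℕ, (X * N ^ d).trace = (N ^ d).trace := by
    intro d
    have hM : r₀ * N ^ d = N ^ d * r₀ := hc.pow_right d
    have e1 : (r₀ * s * N ^ d).trace = (s * r₀ * N ^ d).trace := by
      calc (r₀ * s * N ^ d).trace = (r₀ * (s * N ^ d)).trace := by rw [mul_assoc]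
        _ = ((s * N ^ d) * r₀).trace := Matrix.trace_mul_comm _ _
        _ = (s * r₀ * N ^ d).trace := by rw [mul_assoc, ← hM, ← mul_assoc]
    rw [hX]
    simp [add_mul, sub_mul, Matrix.trace_add, Matrix.trace_sub, e1]
  -- subdiagonal sums of X via N^d
  have hsumd : ∀ d : ℕ,
      (∑ q : Fin n, (if hq : (q : ℕ) + d < n then i ⟨(q : ℕ) + d, hq⟩ * j q else 0))
        = -(N ^ d).trace := by
    intro d
    have hkey : (X * N ^ d).trace
        = ∑ q : Fin n, (if hq : (q : ℕ) + d < n then X ⟨(q : ℕ) + d, hq⟩ q else 0) := by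
      rw [Matrix.trace]
      simp only [Matrix.diag_apply, Matrix.mul_apply]
      rw [Finset.sum_comm]
      apply Finset.sum_congr rfl
      intro q _
      by_cases hq : (q : ℕ) + d < n
      · rw [dif_pos hq, Finset.sum_eq_single (⟨(q : ℕ) + d, hq⟩ : Fin n)]
        · rw [hNd]; simp
        · intro p _ hp
          rw [hNd]
          have hne : ¬ ((q : ℕ) + d = (p : ℕ)) := fun e => hp (Fin.ext e.symm)
          simp [hne]
        · simp
      · rw [dif_neg hq]
        apply Finset.sum_eq_zero
        intro p _
        rw [hNd]
        have hne : ¬ ((q : ℕ) + d = (p : ℕ)) := by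
          have := p.isLt; omega
        simp [hne]
    calc (∑ q : Fin n, (if hq : (q : ℕ) + d < n then i ⟨(q : ℕ) + d, hq⟩ * j q else 0))
        = -∑ q : Fin n, (if hq : (q : ℕ) + d < n then X ⟨(q : ℕ) + d, hq⟩ q else 0) := by
          rw [← Finset.sum_neg_distrib]
          apply Finset.sum_congr rfl
          intro q _
          by_cases hq : (q : ℕ) + d < n <;> simp [hq, hXij]
      _ = -(N ^ d).trace := by rw [← hkey, htrM d]
  -- diagonal sum
  have hsum0 : ∑ p : Fin n, i p * j p = -(n : ℂ) := by
    have hh : ∑ p : Fin n, -(i p * j p) = (n : ℂ) := by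
      rw [← htr]
      exact Finset.sum_congr rfl fun p _ => (hXij p p).symm
    rw [Finset.sum_neg_distrib] at hh
    linear_combination -hh
  -- strict subdiagonal sums vanish
  have hsub : ∀ d : ℕ, 1 ≤ d →
      (∑ q : Fin n, (if hq : (q : ℕ) + d < n then i ⟨(q : ℕ) + d, hq⟩ * j q else 0)) = 0 := by
    intro d hd
    rw [hsumd d]
    have hz : (N ^ d).trace = 0 := by
      rw [Matrix.trace]
      apply Finset.sum_eq_zero
      intro p _
      rw [Matrix.diag_apply, hNd]
      have hne : ¬ ((p : ℕ) + d = (p : ℕ)) := by omega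
      simp [hne]
      omega
    rw [hz, neg_zero]
  -- supports of i and j
  have hnne : (n : ℂ) ≠ 0 := Nat.cast_ne_zero.mpr hn.ne'
  obtain ⟨p₀, _, hp₀⟩ : ∃ p ∈ Finset.univ, i p * j p ≠ 0 :=
    Finset.exists_ne_zero_of_sum_ne_zero (by rw [hsum0]; exact neg_ne_zero.mpr hnne)
  have hi0 : i p₀ ≠ 0 := left_ne_zero_of_mul hp₀
  have hj0 : j p₀ ≠ 0 := right_ne_zero_of_mul hp₀
  set Pi := Finset.univ.filter (fun p => i p ≠ 0) with hPi
  set Pj := Finset.univ.filter (fun q => j q ≠ 0) with hPj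
  have hPine : Pi.Nonempty := ⟨p₀, by simp [hPi, hi0]⟩
  have hPjne : Pj.Nonempty := ⟨p₀, by simp [hPj, hj0]⟩
  set pstar := Pi.max' hPine with hpstar
  set qstar := Pj.min' hPjne with hqstar
  have hps : i pstar ≠ 0 := (Finset.mem_filter.mp (Pi.max'_mem hPine)).2
  have hqs : j qstar ≠ 0 := (Finset.mem_filter.mp (Pj.min'_mem hPjne)).2
  have hmax : ∀ p : Fin n, i p ≠ 0 → (p : ℕ) ≤ (pstar : ℕ) := by
    intro p hp
    exact Fin.le_def.mp (Finset.le_max' Pi p (by simp [hPi, hp]))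
  have hmin : ∀ q : Fin n, j q ≠ 0 → (qstar : ℕ) ≤ (q : ℕ) := by
    intro q hq
    exact Fin.le_def.mp (Finset.min'_le Pj q (by simp [hPj, hq]))
  -- p* ≤ q*
  have hple : (pstar : ℕ) ≤ (qstar : ℕ) := by
    by_contra hgt
    push_neg at hgt
    set d := (pstar : ℕ) - (qstar : ℕ) with hd
    have hd1 : 1 ≤ d := by omega
    have hzero := hsub d hd1
    have hlt : (qstar : ℕ) + d < n := by
      have := pstar.isLt; omega
    rw [Finset.sum_eq_single qstar] at hzero
    · rw [dif_pos hlt] at hzero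
      have he : (⟨(qstar : ℕ) + d, hlt⟩ : Fin n) = pstar :=
        Fin.ext (show (qstar : ℕ) + d = (pstar : ℕ) by omega)
      rw [he] at hzero
      exact (mul_ne_zero hps hqs) hzero
    · intro q _ hq
      rcases lt_or_gt_of_ne hq with hlt' | hgt'
      · have hjz : j q = 0 := by
          by_contra hne
          have := hmin q hne
          have hql : (q : ℕ) < (qstar : ℕ) := hlt'
          omega
        by_cases hcase : (q : ℕ) + d < n <;> simp [hcase, hjz]
      · by_cases hcase : (q : ℕ) + d < n
        · rw [dif_pos hcase]
          have hiz : i ⟨(q : ℕ) + d, hcase⟩ = 0 := by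
            by_contra hne
            have hle := hmax _ hne
            have hql : (qstar : ℕ) < (q : ℕ) := hgt'
            simp only [] at hle
            omega
          simp [hiz]
        · rw [dif_neg hcase]
    · simp
  -- all off-p* diagonal entries vanish
  have hz : ∀ q : Fin n, q ≠ pstar → X q q = 0 := by
    intro q hq
    rw [hXij]
    rcases eq_or_ne (i q) 0 with h1 | h1
    · simp [h1]
    rcases eq_or_ne (j q) 0 with h2 | h2
    · simp [h2]
    exfalso
    have ha : (q : ℕ) ≤ (pstar : ℕ) := hmax q h1
    have hb : (qstar : ℕ) ≤ (q : ℕ) := hmin q h2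
    exact hq (Fin.ext (by omega))
  constructor
  · intro p q hqp
    rw [hXij]
    rcases eq_or_ne (i p) 0 with hip | hip
    · simp [hip]
    · have h1 : (p : ℕ) ≤ (pstar : ℕ) := hmax p hip
      have hjq : j q = 0 := by
        by_contra hne
        have h2 : (qstar : ℕ) ≤ (q : ℕ) := hmin q hne
        have h3 : (q : ℕ) < (p : ℕ) := hqp
        omega
      simp [hjq]
  · refine ⟨pstar, ?_, hz⟩
    rw [← htr]
    exact (Finset.sum_eq_single pstar (fun q _ hq => hz q hq) (by simp)).symm
end
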